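/- Consider K agents running synchronous federated inference. Almost surely, the fusion-center belief on the true hypothesis converges to one: lim_{i→∞} μ_i(θ°) = 1 with probability 1. Precisely: for each i ≥ 1 and agent k let ψ_{k,i}(θ) = f_k(ξ_{k,i}|θ) μ__{i-1}(θ) / ∑_{θ'} f_k(ξ_{k,i}|θ') μ_{i-1}(θ'), and let μ_i(θ) = ∏_{k=1}^K ψ_{k,i}(θ)^{π_k} / ∑_{θ'} ∏_{k=1}^K ψ_{k,i}(θ')^{π_k}. Then μ_i(θ°) → 1 almost surely. -/

import Mathlib

open MeasureTheory ProbabilityTheory Filter Topology ENNReal NNReal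

lemma my_integrable_of_integral_eq_one {α : Type*} [MeasurableSpace α] {m : Measure α}
    {f : α → ℝ} (h : ∫ x, f x ∂m = 1) : Integrable f m := by
  by_contra hc
  rw [integral_undef hc] at h
  exact one_ne_zero h.symm

lemma my_kl_nonneg {α : Type*} [MeasurableSpace α] {m : Measure α}
    {f g : α → ℝ} (hf : ∀ x, 0 < f x) (hg : ∀ x, 0 < g x)
    (hfi : ∫ x, f x ∂m = 1) (hgi : ∫ x, g x ∂m = 1)
    (hint : Integrable (fun x => f x * Real.log (f x / g x)) m) :
    0 ≤ ∫ x, f x * Real.log (f x / g x) ∂m := by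
  have hfI : Integrable f m := my_integrable_of_integral_eq_one hfi
  have hgI : Integrable g m := my_integrable_of_integral_eq_one hgi
  have hmono : ∀ x, f x - g x ≤ f x * Real.log (f x / g x) := by
    intro x
    have h1 : Real.log (g x / f x) ≤ g x / f x - 1 :=
      Real.log_le_sub_one_of_pos (div_pos (hg x) (hf x))
    have h2 : Real.log (f x / g x) = - Real.log (g x / f x) := by
      rw [← Real.log_inv, inv_div]
    nlinarith [hf x, (mul_le_mul_of_nonneg_left h1 (hf x).le),
      mul_div_cancel₀ (g x) (hf x).ne']
  have := integral_mono (f := fun x => f x - g x) (hfI.sub hgI) hint hmono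
  rw [integral_sub hfI hgI, hfi, hgi] at this
  linarith

lemma my_slln {Ω : Type*} [MeasureSpace Ω] [IsProbabilityMeasure (ℙ : Measure Ω)]
    {α : Type*} [MeasurableSpace α] {ν : Measure α} {f₀ : α → ℝ}
    (hf₀meas : Measurable f₀) (hf₀pos : ∀ x, 0 < f₀ x)
    (ξ : ℕ → Ω → α) (hξmeas : ∀ i, Measurable (ξ i))
    (hξindep : iIndepFun ξ ℙ)
    (hξlaw : ∀ i, Measure.map (ξ i) ℙ = ν.withDensity (fun x => ENNReal.ofReal (f₀ x)))
    (g : α → ℝ) (hgmeas : Measurable g)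
    (hint : Integrable (fun x => f₀ x * g x) ν) :
    ∀ᵐ ω ∂ℙ, Tendsto (fun n : ℕ => (∑ j ∈ Finset.range n, g (ξ (j + 1) ω)) / n)
      atTop (𝓝 (∫ x, f₀ x * g x ∂ν)) := by
  set X : ℕ → Ω → ℝ := fun j ω => g (ξ (j + 1) ω) with hX
  have hnn : Measurable (fun x => (f₀ x).toNNReal) := hf₀meas.real_toNNReal
  have hwd : ν.withDensity (fun x => ENNReal.ofReal (f₀ x)) =
      ν.withDensity (fun x => ((f₀ x).toNNReal : ℝ≥0∞)) := rfl
  have hintX : Integrable (X 0) ℙ := by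
    have h1 : Integrable g (Measure.map (ξ 1) ℙ) := by
      rw [hξlaw 1, hwd, integrable_withDensity_iff_integrable_smul hnn]
      refine hint.congr (Eventually.of_forall fun x => ?_)
      simp [NNReal.smul_def, Real.coe_toNNReal _ (hf₀pos x).le]
    exact (integrable_map_measure hgmeas.aestronglyMeasurable
      (hξmeas 1).aemeasurable).mp h1
  have hident : ∀ i, IdentDistrib (X i) (X 0) ℙ ℙ := by
    intro i
    have : IdentDistrib (ξ (i + 1)) (ξ 1) ℙ ℙ :=
      ⟨(hξmeas _).aemeasurable, (hξmeas _).aemeasurable, by rw [hξlaw, hξlaw]⟩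
    exact this.comp hgmeas
  have hindep : Pairwise (Function.onFun (IndepFun · · ℙ) X) := by
    intro i j hij
    exact (hξindep.indepFun (by omega : i + 1 ≠ j + 1)).comp hgmeas hgmeas
  have hval : (ℙ : Measure Ω)[X 0] = ∫ x, f₀ x * g x ∂ν := by
    have h2 : (ℙ : Measure Ω)[X 0] = ∫ x, g x ∂(Measure.map (ξ 1) ℙ) :=
      (integral_map (hξmeas 1).aemeasurable hgmeas.aestronglyMeasurable).symm
    rw [h2, hξlaw 1, hwd, integral_withDensity_eq_integral_smul hnn]
    refine integral_congr_ae (Eventually.of_forall fun x => ?_)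
    simp [NNReal.smul_def, Real.coe_toNNReal _ (hf₀pos x).le]
  have := strong_law_ae_real X hintX hindep hident
  rw [hval] at this
  exact this

lemma my_alg {K : ℕ} (π A B C : Fin K → ℝ) (m m0 s : ℝ) (hπsum : ∑ k, π k = 1) :
    (∑ k, π k * (A k + m - C k)) - s - ((∑ k, π k * (B k + m0 - C k)) - s) =
      (m - m0) + ∑ k, π k * (A k - B k) := by
  have h : ∀ k : Fin K, π k * (A k + m - C k) - π k * (B k + m0 - C k) =
      π k * (A k - B k) + π k * (m - m0) := fun k => by ring
  rw [sub_sub_sub_cancel_right, ← Finset.sum_sub_distrib,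
    Finset.sum_congr rfl (fun k _ => h k), Finset.sum_add_distrib, ← Finset.sum_mul, hπsum,
    one_mul, add_comm]

set_option maxHeartbeats 1000000 in
/-- **Theorem 1 (pre-intervention), synchronous collaboration.**
`K ≥ 2` heterogeneous agents with positive likelihood densities `f k θ` (w.r.t. σ-finite
measures `ν k`), finite KL-informativeness `d k θ`, global identifiability, i.i.d.
observations `ξ k i` distributed according to the true likelihood `f k θ₀ · ν k`, and a
fully supported initial belief run the synchronous federated inference recursion
`ψ_{k,i}(θ) ∝ f_k(ξ_{k,i}|θ) μ_{i-1}(θ)` and `μ_i(θ) ∝ ∏_k ψ_{k,i}(θ)^{π_k}`.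
Then the fusion-center belief on the true hypothesis converges to one almost surely. -/
theorem synchronous_belief_convergence
    {K : ℕ} (hK : 2 ≤ K)
    {Θ : Type*} [Fintype Θ] [Nonempty Θ] (θ₀ : Θ)
    (π : Fin K → ℝ) (hπ : ∀ k, π k ∈ Set.Ioo (0 : ℝ) 1) (hπsum : ∑ k, π k = 1)
    {X : Fin K → Type*} [∀ k, MeasurableSpace (X k)]
    (ν : ∀ k, Measure (X k)) (hν : ∀ k, SigmaFinite (ν k))
    (f : ∀ k, Θ → X k → ℝ)
    (hfpos : ∀ k θ x, 0 < f k θ x)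
    (hfmeas : ∀ k θ, Measurable (f k θ))
    (hfprob : ∀ k θ, ∫ x, f k θ x ∂ν k = 1)
    (d : Fin K → Θ → ℝ)
    (hdint : ∀ k θ, Integrable (fun x => f k θ₀ x * Real.log (f k θ₀ x / f k θ x)) (ν k))
    (hd : ∀ k θ, d k θ = ∫ x, f k θ₀ x * Real.log (f k θ₀ x / f k θ x) ∂ν k)
    (hglobal : ∀ θ, θ ≠ θ₀ → ∃ k, 0 < d k θ)
    {Ω : Type*} [MeasureSpace Ω] [IsProbabilityMeasure (ℙ : Measure Ω)]
    (ξ : ∀ k : Fin K, ℕ → Ω → X k)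
    (hξmeas : ∀ k i, Measurable (ξ k i))
    (hξindep : ∀ k, iIndepFun (ξ k) ℙ)
    (hξlaw : ∀ k i, Measure.map (ξ k i) ℙ =
      (ν k).withDensity (fun x => ENNReal.ofReal (f k θ₀ x)))
    (μ₀ : Θ → ℝ) (hμ₀pos : ∀ θ, 0 < μ₀ θ) (hμ₀sum : ∑ θ, μ₀ θ = 1)
    (ψ : Fin K → ℕ → Ω → Θ → ℝ) (μ : ℕ → Ω → Θ → ℝ)
    (hinit : ∀ ω, μ 0 ω = μ₀)
    (hψ : ∀ (k : Fin K) (i : ℕ) (ω : Ω) (θ : Θ), ψ k (i + 1) ω θ =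
      f k θ (ξ k (i + 1) ω) * μ i ω θ /
        ∑ θ', f k θ' (ξ k (i + 1) ω) * μ i ω θ')
    (hμ : ∀ (i : ℕ) (ω : Ω) (θ : Θ), μ (i + 1) ω θ =
      (∏ k, ψ k (i + 1) ω θ ^ π k) / ∑ θ', ∏ k, ψ k (i + 1) ω θ' ^ π k) :
    ∀ᵐ ω ∂ℙ, Tendsto (fun i => μ i ω θ₀) atTop (nhds 1) := by
  classical
  -- positivity and normalization of beliefs
  have key : ∀ (i : ℕ) (ω : Ω), (∀ θ, 0 < μ i ω θ) ∧ (∑ θ, μ i ω θ = 1) := by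
    intro i
    induction i with
    | zero => intro ω; rw [hinit]; exact ⟨hμ₀pos, hμ₀sum⟩
    | succ i ih =>
      intro ω
      obtain ⟨hp, hs⟩ := ih ω
      have hψpos : ∀ k θ, 0 < ψ k (i + 1) ω θ := by
        intro k θ
        rw [hψ]
        exact div_pos (mul_pos (hfpos k θ _) (hp θ))
          (Finset.sum_pos (fun θ' _ => mul_pos (hfpos k θ' _) (hp θ'))
            Finset.univ_nonempty)
      have hPpos : ∀ θ, 0 < ∏ k, ψ k (i + 1) ω θ ^ π k := fun θ =>
        Finset.prod_pos (fun k _ => Real.rpow_pos_of_pos (hψpos k θ) _)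
      have hSpos : 0 < ∑ θ', ∏ k, ψ k (i + 1) ω θ' ^ π k :=
        Finset.sum_pos (fun θ' _ => hPpos θ') Finset.univ_nonempty
      refine ⟨fun θ => ?_, ?_⟩
      · rw [hμ]; exact div_pos (hPpos θ) hSpos
      · simp only [hμ]
        rw [← Finset.sum_div, div_self hSpos.ne']
  have hpos : ∀ (i : ℕ) (ω : Ω) (θ : Θ), 0 < μ i ω θ := fun i ω => (key i ω).1
  -- one-step log ratio recursion
  have hlog : ∀ (θ : Θ) (i : ℕ) (ω : Ω),
      Real.log (μ (i + 1) ω θ) - Real.log (μ (i + 1) ω θ₀) =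
        (Real.log (μ i ω θ) - Real.log (μ i ω θ₀)) +
        ∑ k, π k * (Real.log (f k θ (ξ k (i + 1) ω)) -
          Real.log (f k θ₀ (ξ k (i + 1) ω))) := by
    intro θ i ω
    have hp : ∀ θ', 0 < μ i ω θ' := hpos i ω
    have hDpos : ∀ k : Fin K, 0 < ∑ θ', f k θ' (ξ k (i + 1) ω) * μ i ω θ' := fun k =>
      Finset.sum_pos (fun θ' _ => mul_pos (hfpos k θ' _) (hp θ')) Finset.univ_nonempty
    have hψpos : ∀ k θ', 0 < ψ k (i + 1) ω θ' := by
      intro k θ'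
      rw [hψ]
      exact div_pos (mul_pos (hfpos k θ' _) (hp θ')) (hDpos k)
    have hSpos : 0 < ∑ θ', ∏ k, ψ k (i + 1) ω θ' ^ π k :=
      Finset.sum_pos (fun θ' _ => Finset.prod_pos
        (fun k _ => Real.rpow_pos_of_pos (hψpos k θ') _)) Finset.univ_nonempty
    have hlogψ : ∀ (k : Fin K) (θ' : Θ), Real.log (ψ k (i + 1) ω θ') =
        Real.log (f k θ' (ξ k (i + 1) ω)) + Real.log (μ i ω θ') -
          Real.log (∑ θ'', f k θ'' (ξ k (i + 1) ω) * μ i ω θ'') := by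
      intro k θ'
      rw [hψ, Real.log_div (mul_pos (hfpos k θ' _) (hp θ')).ne' (hDpos k).ne',
        Real.log_mul (hfpos k θ' _).ne' (hp θ').ne']
    have hlogμ : ∀ θ' : Θ, Real.log (μ (i + 1) ω θ') =
        (∑ k, π k * Real.log (ψ k (i + 1) ω θ')) -
          Real.log (∑ θ'', ∏ k, ψ k (i + 1) ω θ'' ^ π k) := by
      intro θ'
      rw [hμ, Real.log_div (Finset.prod_pos
        (fun k _ => Real.rpow_pos_of_pos (hψpos k θ') _)).ne' hSpos.ne',
        Real.log_prod (fun k _ => (Real.rpow_pos_of_pos (hψpos k θ') _).ne')]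
      congr 1
      exact Finset.sum_congr rfl fun k _ => Real.log_rpow (hψpos k θ') _
    have e1 : ∀ θ' : Θ, ∑ k, π k * Real.log (ψ k (i + 1) ω θ') =
        ∑ k, π k * (Real.log (f k θ' (ξ k (i + 1) ω)) + Real.log (μ i ω θ') -
          Real.log (∑ θ'', f k θ'' (ξ k (i + 1) ω) * μ i ω θ'')) :=
      fun θ' => Finset.sum_congr rfl fun k _ => by rw [hlogψ k θ']
    rw [hlogμ θ, hlogμ θ₀, e1 θ, e1 θ₀]
    exact my_alg π _ _ _ _ _ _ hπsum
  -- telescoping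
  have hRtel : ∀ (θ : Θ) (n : ℕ) (ω : Ω),
      Real.log (μ n ω θ) - Real.log (μ n ω θ₀) =
        (Real.log (μ₀ θ) - Real.log (μ₀ θ₀)) +
        ∑ j ∈ Finset.range n, ∑ k, π k * (Real.log (f k θ (ξ k (j + 1) ω)) -
          Real.log (f k θ₀ (ξ k (j + 1) ω))) := by
    intro θ n ω
    induction n with
    | zero => simp [hinit]
    | succ n ih => rw [hlog θ n ω, ih, Finset.sum_range_succ]; ring
  -- SLLN for each agent and hypothesis
  have hslln : ∀ (k : Fin K) (θ : Θ), ∀ᵐ ω ∂ℙ,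
      Tendsto (fun n : ℕ => (∑ j ∈ Finset.range n,
        (Real.log (f k θ (ξ k (j + 1) ω)) - Real.log (f k θ₀ (ξ k (j + 1) ω)))) / n)
        atTop (𝓝 (- d k θ)) := by
    intro k θ
    set g : X k → ℝ := fun x => Real.log (f k θ x) - Real.log (f k θ₀ x) with hg
    have hgmeas : Measurable g := ((hfmeas k θ).log).sub ((hfmeas k θ₀).log)
    have hptwise : (fun x => f k θ₀ x * g x) =
        fun x => -(f k θ₀ x * Real.log (f k θ₀ x / f k θ x)) := by
      funext x
      rw [hg, Real.log_div (hfpos k θ₀ x).ne' (hfpos k θ x).ne']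
      ring
    have hint : Integrable (fun x => f k θ₀ x * g x) (ν k) := by
      rw [hptwise]; exact (hdint k θ).neg
    have hval : ∫ x, f k θ₀ x * g x ∂ν k = - d k θ := by
      rw [hptwise, integral_neg, hd]
    have := my_slln (hfmeas k θ₀) (hfpos k θ₀) (ξ k) (hξmeas k) (hξindep k)
      (hξlaw k) g hgmeas hint
    rw [hval] at this
    exact this
  have hae : ∀ᵐ ω ∂ℙ, ∀ (k : Fin K) (θ : Θ),
      Tendsto (fun n : ℕ => (∑ j ∈ Finset.range n,
        (Real.log (f k θ (ξ k (j + 1) ω)) - Real.log (f k θ₀ (ξ k (j + 1) ω)))) / n)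
        atTop (𝓝 (- d k θ)) := by
    rw [ae_all_iff]
    intro k
    rw [ae_all_iff]
    exact hslln k
  -- main pointwise argument
  filter_upwards [hae] with ω H
  -- each wrong hypothesis' ratio tends to 0
  have hratio : ∀ θ : Θ, θ ≠ θ₀ →
      Tendsto (fun n : ℕ => μ n ω θ / μ n ω θ₀) atTop (𝓝 0) := by
    intro θ hθ
    set S : Fin K → ℕ → ℝ := fun k n => ∑ j ∈ Finset.range n,
      (Real.log (f k θ (ξ k (j + 1) ω)) - Real.log (f k θ₀ (ξ k (j + 1) ω))) with hS
    set Y : ℕ → ℝ := fun n => ∑ j ∈ Finset.range n, ∑ k, π k *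
      (Real.log (f k θ (ξ k (j + 1) ω)) - Real.log (f k θ₀ (ξ k (j + 1) ω))) with hY
    have hYS : ∀ n, Y n = ∑ k, π k * S k n := by
      intro n
      simp only [hY, hS]
      rw [Finset.sum_comm]
      exact Finset.sum_congr rfl fun k _ => (Finset.mul_sum _ _ _).symm
    set ℓ : ℝ := ∑ k, π k * (- d k θ) with hℓ
    have hℓneg : ℓ < 0 := by
      have hdnonneg : ∀ k, 0 ≤ d k θ := by
        intro k
        rw [hd]
        exact my_kl_nonneg (hfpos k θ₀) (hfpos k θ) (hfprob k θ₀) (hfprob k θ)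
          (hdint k θ)
      have : 0 < ∑ k, π k * d k θ := by
        obtain ⟨k₀, hk₀⟩ := hglobal θ hθ
        refine Finset.sum_pos' (fun k _ => mul_nonneg (hπ k).1.le (hdnonneg k)) ?_
        exact ⟨k₀, Finset.mem_univ k₀, mul_pos (hπ k₀).1 hk₀⟩
      have heq : ℓ = -(∑ k, π k * d k θ) := by
        rw [hℓ, ← Finset.sum_neg_distrib]
        exact Finset.sum_congr rfl fun k _ => by ring
      rw [heq]; linarith
    have hYdiv : Tendsto (fun n : ℕ => Y n / n) atTop (𝓝 ℓ) := by
      have heq : (fun n : ℕ => Y n / n) = fun n : ℕ => ∑ k, π k * (S k n / n) := by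
        funext n
        rw [hYS, Finset.sum_div]
        exact Finset.sum_congr rfl fun k _ => (mul_div_assoc _ _ _)
      rw [heq, hℓ]
      exact tendsto_finset_sum _ fun k _ => (H k θ).const_mul _
    have hYbot : Tendsto Y atTop atBot := by
      have h1 : Tendsto (fun n : ℕ => (Y n / n) * n) atTop atBot :=
        Tendsto.neg_mul_atTop hℓneg hYdiv tendsto_natCast_atTop_atTop
      refine h1.congr' ?_
      filter_upwards [eventually_ge_atTop 1] with n hn
      have : (n : ℝ) ≠ 0 := Nat.cast_ne_zero.mpr (by omega)
      field_simp
    have hlogbot : Tendsto (fun n : ℕ =>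
        Real.log (μ n ω θ) - Real.log (μ n ω θ₀)) atTop atBot := by
      have heq : (fun n : ℕ => Real.log (μ n ω θ) - Real.log (μ n ω θ₀)) =
          fun n : ℕ => (Real.log (μ₀ θ) - Real.log (μ₀ θ₀)) + Y n := by
        funext n; exact hRtel θ n ω
      rw [heq]
      exact tendsto_atBot_add_const_left _ _ hYbot
    have heq2 : (fun n : ℕ => μ n ω θ / μ n ω θ₀) =
        fun n : ℕ => Real.exp (Real.log (μ n ω θ) - Real.log (μ n ω θ₀)) := by
      funext n
      rw [Real.exp_sub, Real.exp_log (hpos n ω θ), Real.exp_log (hpos n ω θ₀)]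
    rw [heq2]
    exact Real.tendsto_exp_atBot.comp hlogbot
  -- the sum of ratios tends to 1
  have hsumratio : Tendsto (fun n : ℕ => ∑ θ, μ n ω θ / μ n ω θ₀) atTop (𝓝 1) := by
    have h1 : Tendsto (fun n : ℕ => ∑ θ, μ n ω θ / μ n ω θ₀) atTop
        (𝓝 (∑ θ : Θ, if θ = θ₀ then (1 : ℝ) else 0)) := by
      refine tendsto_finset_sum _ fun θ _ => ?_
      by_cases hθ : θ = θ₀
      · subst hθ
        simp only [if_pos rfl]
        have : (fun n : ℕ => μ n ω θ / μ n ω θ) = fun _ => (1 : ℝ) := by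
          funext n; exact div_self (hpos n ω θ).ne'
        rw [this]; exact tendsto_const_nhds
      · simp only [if_neg hθ]; exact hratio θ hθ
    simpa using h1
  -- conclude
  have heq3 : (fun n : ℕ => μ n ω θ₀) =
      fun n : ℕ => (∑ θ, μ n ω θ / μ n ω θ₀)⁻¹ := by
    funext n
    rw [← Finset.sum_div, (key n ω).2, one_div, inv_inv]
  rw [heq3]
  have := hsumratio.inv₀ one_ne_zero
  simpa using this
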